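/- arXiv:1205.0843 — 3 statements merged into one kernel-verified Lean document; each statement's English description precedes it below -/
import Mathlib

section
/- Let x'_2, ..., x'_n be independent, with x'_i uniform on [0, 1−s_i], where 0 ≤ s_i ≤ 1 and s_1 := (n−2) − (s_2 + ... + s_n) satisfies 0 ≤ s_1 ≤ 1 − n^{−2B−2} and each s_i ≤ 1 − n^{−2B−2} for i ≥ 2. Then P(s_1 ≤ x'_2 + ... + x'_n ≤ 1) ≥ (1−s_1)/(1+s_1), which is Ω(n^{−2B−2}). -/
open MeasureTheory Set

noncomputable section

namespace Stmt5

/-- `W` is symmetric about `m` and antitone in distance from `m`. -/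
def SymAnti (m : ℝ) (W : ℝ → ENNReal) : Prop :=
  ∀ ⦃c c'⦄, |c - m| ≤ |c' - m| → W c' ≤ W c

lemma SymAnti.reflect {m : ℝ} {W : ℝ → ENNReal} (h : SymAnti m W) (c : ℝ) :
    W (2 * m - c) = W c := by
  have key : |2 * m - c - m| = |c - m| := by
    rw [abs_sub_comm c m]; congr 1; ring
  exact le_antisymm (h key.ge) (h key.le)

lemma SymAnti.measurable {m : ℝ} {W : ℝ → ENNReal} (h : SymAnti m W) : Measurable W := by
  have hg : Antitone (fun r : ℝ => W (m + max r 0)) := by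
    intro r r' hrr'
    apply h
    rw [add_sub_cancel_left, add_sub_cancel_left, abs_of_nonneg (le_max_right _ _),
      abs_of_nonneg (le_max_right _ _)]
    exact max_le_max hrr' le_rfl
  have hWeq : W = fun c => (fun r : ℝ => W (m + max r 0)) |c - m| := by
    funext c
    simp only [max_eq_left (abs_nonneg (c - m))]
    refine le_antisymm (h ?_) (h ?_) <;>
      rw [add_sub_cancel_left, abs_abs]
  rw [hWeq]
  exact hg.measurable.comp ((measurable_id.sub_const m).abs)

lemma SymAnti.const_mul {m : ℝ} {W : ℝ → ENNReal} (h : SymAnti m W) (c : ENNReal) :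
    SymAnti m (fun t => c * W t) := fun _ _ hd => mul_le_mul_right (h hd) c

/-- Translating an `Ioc` set-lintegral. -/
lemma lint_Ioc_translate (W : ℝ → ENNReal) (p q δ : ℝ) :
    ∫⁻ u in Ioc p q, W (u + δ) = ∫⁻ u in Ioc (p + δ) (q + δ), W u := by
  rw [← lintegral_indicator measurableSet_Ioc, ← lintegral_indicator measurableSet_Ioc]
  have hpt : ∀ u : ℝ, (Ioc p q).indicator (fun u => W (u + δ)) u
      = (Ioc (p + δ) (q + δ)).indicator W (u + δ) := by
    intro u
    by_cases hu : u ∈ Ioc p q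
    · rw [indicator_of_mem hu, indicator_of_mem
        (Set.mem_Ioc.mpr ⟨by linarith [hu.1], by linarith [hu.2]⟩)]
    · rw [indicator_of_notMem hu, indicator_of_notMem
        (fun hc => hu (Set.mem_Ioc.mpr ⟨by linarith [hc.1], by linarith [hc.2]⟩))]
  simp_rw [hpt]
  exact lintegral_add_right_eq_self ((Ioc (p + δ) (q + δ)).indicator W) δ

/-- Reflecting an `Ioc` set-lintegral. -/
lemma lint_Ioc_reflect (W : ℝ → ENNReal) (r p q : ℝ) :
    ∫⁻ u in Ioc p q, W u = ∫⁻ v in Ioc (r - q) (r - p), W (r - v) := by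
  rw [← lintegral_indicator measurableSet_Ioc, ← lintegral_indicator measurableSet_Ioc]
  have hmp : MeasurePreserving (fun v : ℝ => r - v) volume volume :=
    Measure.measurePreserving_sub_left volume r
  have hemb : MeasurableEmbedding (fun v : ℝ => r - v) :=
    (MeasurableEquiv.subLeft r).measurableEmbedding
  have e := hmp.lintegral_comp_emb hemb ((Ioc p q).indicator W)
  rw [← e]
  have hpt : ∀ v : ℝ, (Ioc p q).indicator W (r - v)
      = (Ico (r - q) (r - p)).indicator (fun v => W (r - v)) v := by
    intro v
    by_cases hv : v ∈ Ico (r - q) (r - p)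
    · rw [indicator_of_mem (Set.mem_Ioc.mpr ⟨by linarith [hv.2], by linarith [hv.1]⟩),
        indicator_of_mem hv]
    · rw [indicator_of_notMem hv, indicator_of_notMem]
      intro hc
      exact hv (Set.mem_Ico.mpr ⟨by linarith [hc.2], by linarith [hc.1]⟩)
  simp_rw [hpt]
  rw [lintegral_indicator measurableSet_Ico, lintegral_indicator measurableSet_Ioc]
  refine setLIntegral_congr ?_
  exact (Ico_ae_eq_Icc).trans (Ioc_ae_eq_Icc).symm

/-- Window-averaging preserves symmetric unimodality. -/
lemma symAnti_window {m : ℝ} {W : ℝ → ENNReal} (hW : SymAnti m W) {a : ℝ} (ha : 0 ≤ a) :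
    SymAnti (m + a / 2) (fun c => ∫⁻ u in Ioc (c - a) c, W u) := by
  set V : ℝ → ENNReal := fun c => ∫⁻ u in Ioc (c - a) c, W u with hV
  set mb : ℝ := m + a / 2 with hmb
  -- pointwise comparison step
  have hstep : ∀ v δ : ℝ, m - a / 2 ≤ v → a ≤ δ → W (v + δ) ≤ W v := by
    intro v δ hv hδ
    apply hW
    rw [abs_of_nonneg (by linarith : (0:ℝ) ≤ v + δ - m)]
    rw [abs_le]
    constructor <;> linarith
  -- reflection symmetry of V
  have hrefl : ∀ c, V (2 * mb - c) = V c := by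
    intro c
    have h1 : V (2 * mb - c) = ∫⁻ v in Ioc (c - a) c, W (2 * m - v) := by
      rw [hV]
      simp only
      rw [lint_Ioc_reflect W (2 * m)]
      congr 2 <;> · rw [hmb]; ring
    rw [h1]
    rw [hV]
    simp only
    refine setLIntegral_congr_fun measurableSet_Ioc ?_
    intro v _
    exact hW.reflect v
  -- monotone comparison on the right half
  have hcore : ∀ c c' : ℝ, mb ≤ c → c ≤ c' → V c' ≤ V c := by
    intro c c' hc hcc'
    by_cases hfar : c + a ≤ c'
    · -- disjoint case: single translation
      have htr : V c' = ∫⁻ v in Ioc (c - a) c, W (v + (c' - c)) := by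
        rw [hV]; simp only
        rw [lint_Ioc_translate W (c - a) c (c' - c)]
        congr 2 <;> ring
      rw [htr]
      refine setLIntegral_mono hW.measurable ?_
      intro v hv
      exact hstep v (c' - c) (by rw [hmb] at hc; linarith [hv.1]) (by linarith)
    · push_neg at hfar
      -- overlapping case: split both windows
      have hsplit1 : V c' = (∫⁻ u in Ioc (c' - a) c, W u) + ∫⁻ u in Ioc c c', W u := by
        rw [hV]; simp only
        rw [← lintegral_union measurableSet_Ioc (Set.Ioc_disjoint_Ioc_of_le le_rfl),
          Set.Ioc_union_Ioc_eq_Ioc (by linarith) (by linarith)]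
      have hsplit2 : V c = (∫⁻ u in Ioc (c - a) (c' - a), W u) + ∫⁻ u in Ioc (c' - a) c, W u := by
        rw [hV]; simp only
        rw [← lintegral_union measurableSet_Ioc (Set.Ioc_disjoint_Ioc_of_le le_rfl),
          Set.Ioc_union_Ioc_eq_Ioc (by linarith) (by linarith)]
      rw [hsplit1, hsplit2, add_comm (∫⁻ u in Ioc (c - a) (c' - a), W u)]
      refine add_le_add le_rfl ?_
      have htr : (∫⁻ u in Ioc c c', W u) = ∫⁻ v in Ioc (c - a) (c' - a), W (v + a) := by
        rw [lint_Ioc_translate W (c - a) (c' - a) a]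
        congr 2 <;> ring
      rw [htr]
      refine setLIntegral_mono hW.measurable ?_
      intro v hv
      exact hstep v a (by rw [hmb] at hc; linarith [hv.1]) le_rfl
  -- conclude
  intro c c' hd
  have hc0 : V (2 * mb - c) = V c := hrefl c
  have hc0' : V (2 * mb - c') = V c' := hrefl c'
  rcases le_total mb c with h1 | h1 <;> rcases le_total mb c' with h2 | h2
  · exact hcore c c' h1 (by rw [abs_of_nonneg (by linarith), abs_of_nonneg (by linarith)] at hd; linarith)
  · rw [← hc0']
    exact hcore c (2 * mb - c') h1
      (by rw [abs_of_nonneg (by linarith), abs_of_nonpos (by linarith)] at hd; linarith)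
  · rw [← hc0]
    exact hcore (2 * mb - c) c' (by linarith)
      (by rw [abs_of_nonpos (by linarith), abs_of_nonneg (by linarith)] at hd; linarith)
  · rw [← hc0, ← hc0']
    exact hcore (2 * mb - c) (2 * mb - c') (by linarith)
      (by rw [abs_of_nonpos (by linarith), abs_of_nonpos (by linarith)] at hd; linarith)

/-- The uniform probability measure on `[0, b]`. -/
def unifP (b : ℝ) : Measure ℝ :=
  (volume (Icc (0:ℝ) b))⁻¹ • volume.restrict (Icc 0 b)

instance unifP_finite (b : ℝ) : IsFiniteMeasure (unifP b) := by
  constructor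
  rw [unifP, Measure.smul_apply, smul_eq_mul, Measure.restrict_apply_univ, Real.volume_Icc]
  rcases le_or_gt b 0 with hb | hb
  · rw [ENNReal.ofReal_eq_zero.mpr (by linarith)]
    simp
  · rw [ENNReal.inv_mul_cancel (by simp [hb]) ENNReal.ofReal_ne_top]
    exact ENNReal.one_lt_top

lemma unifP_univ {b : ℝ} (hb : 0 < b) : unifP b univ = 1 := by
  rw [unifP, Measure.smul_apply, smul_eq_mul, Measure.restrict_apply_univ, Real.volume_Icc]
  rw [ENNReal.inv_mul_cancel (by simp [hb]) ENNReal.ofReal_ne_top]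

lemma unifP_Icc {b : ℝ} (hb : 0 < b) : unifP b (Icc 0 b) = 1 := by
  rw [unifP, Measure.smul_apply, smul_eq_mul, Measure.restrict_apply measurableSet_Icc,
    Set.inter_self, Real.volume_Icc]
  rw [ENNReal.inv_mul_cancel (by simp [hb]) ENNReal.ofReal_ne_top]

lemma measurable_finSum (k : ℕ) : Measurable (fun x : Fin k → ℝ => ∑ i, x i) :=
  Finset.measurable_sum _ (fun i _ => measurable_pi_apply i)

/-- Decomposition of the pi measure of a sum event over `Fin (k+1)`. -/
lemma pi_succ_apply (k : ℕ) (a : Fin (k + 1) → ℝ) (A : Set ℝ) (hA : MeasurableSet A) :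
    Measure.pi (fun i => unifP (a i)) {x | (∑ i, x i) ∈ A}
      = ((unifP (a 0)).prod (Measure.pi fun i => unifP (a (Fin.succ i))))
          {p : ℝ × (Fin k → ℝ) | p.1 + ∑ i, p.2 i ∈ A} := by
  have hmp := measurePreserving_piFinSuccAbove (fun i => unifP (a i)) 0
  have hTm : MeasurableSet {p : ℝ × (Fin k → ℝ) | p.1 + ∑ i, p.2 i ∈ A} :=
    (measurable_fst.add ((measurable_finSum k).comp measurable_snd)) hA
  have h0 : (fun j : Fin k => unifP (a ((0 : Fin (k+1)).succAbove j)))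
      = fun j : Fin k => unifP (a (Fin.succ j)) := by
    funext j; rw [Fin.succAbove_zero]
  rw [← h0, ← hmp.measure_preimage hTm.nullMeasurableSet]
  congr 1
  ext x
  simp only [Set.mem_preimage, Set.mem_setOf_eq, MeasurableEquiv.piFinSuccAbove_apply,
    Fin.insertNthEquiv_symm_apply, Fin.removeNth]
  rw [Fin.sum_univ_succAbove x 0]

/-- Key unimodality lemma: window measures of the sum under the product of uniforms
are symmetric around the mean and antitone in distance from it. -/
lemma key : ∀ (k : ℕ) (a : Fin k → ℝ), (∀ i, 0 < a i) → ∀ (h : ℝ), 0 ≤ h →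
    SymAnti ((∑ i, a i) / 2)
      (fun c => Measure.pi (fun i => unifP (a i)) {x | (∑ i, x i) ∈ Icc (c - h) (c + h)}) := by
  intro k
  induction k with
  | zero =>
    intro a _ h hh c c' hcc
    refine measure_mono ?_
    intro x hx
    simp only [Finset.univ_eq_empty, Finset.sum_empty, Set.mem_setOf_eq, Set.mem_Icc] at *
    have h1 : |c'| ≤ h := abs_le.mpr ⟨by linarith [hx.1], by linarith [hx.2]⟩
    have h2 : |c| ≤ h := le_trans (by simpa using hcc) h1
    have h3 := abs_le.mp h2
    constructor <;> linarith [h3.1, h3.2]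
  | succ k ih =>
    intro a ha h hh
    have hwin : ∀ c : ℝ,
        Measure.pi (fun i => unifP (a i)) {x | (∑ i, x i) ∈ Icc (c - h) (c + h)}
          = (volume (Icc (0:ℝ) (a 0)))⁻¹ *
            ∫⁻ u in Ioc (c - a 0) c,
              Measure.pi (fun i => unifP (a (Fin.succ i)))
                {x | (∑ i, x i) ∈ Icc (u - h) (u + h)} := by
      intro c
      rw [pi_succ_apply k a _ measurableSet_Icc]
      have hTm : MeasurableSet
          {p : ℝ × (Fin k → ℝ) | p.1 + ∑ i, p.2 i ∈ Icc (c - h) (c + h)} :=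
        (measurable_fst.add ((measurable_finSum k).comp measurable_snd)) measurableSet_Icc
      rw [Measure.prod_apply hTm]
      have hsl : ∀ y : ℝ,
          (Prod.mk y ⁻¹' {p : ℝ × (Fin k → ℝ) | p.1 + ∑ i, p.2 i ∈ Icc (c - h) (c + h)})
            = {x : Fin k → ℝ | (∑ i, x i) ∈ Icc ((c - y) - h) ((c - y) + h)} := by
        intro y; ext x
        simp only [Set.mem_preimage, Set.mem_setOf_eq, Set.mem_Icc]
        constructor <;> intro hx <;> constructor <;> linarith [hx.1, hx.2]
      simp_rw [hsl]
      simp only [unifP]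
      rw [lintegral_smul_measure]
      congr 1
      rw [lint_Ioc_reflect _ c (c - a 0) c]
      have hb1 : c - c = 0 := by ring
      have hb2 : c - (c - a 0) = a 0 := by ring
      rw [hb1, hb2]
      refine setLIntegral_congr ?_
      exact (Ioc_ae_eq_Icc).symm
    have hW' := ih (fun i => a (Fin.succ i)) (fun i => ha _) h hh
    have hmain := (symAnti_window hW' (le_of_lt (ha 0))).const_mul
      (volume (Icc (0:ℝ) (a 0)))⁻¹
    have hcenter : (∑ i, a (Fin.succ i)) / 2 + a 0 / 2 = (∑ i, a i) / 2 := by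
      rw [Fin.sum_univ_succ]; ring
    intro c c' hcc
    simp only [hwin]
    rw [← hcenter] at hcc
    exact hmain hcc

/-- Density representation: the law of the sum has density
`t ↦ (a 0)⁻¹ · μ' {∑ ∈ [t - a 0, t]}` with respect to Lebesgue measure. -/
lemma pi_sum_density (k : ℕ) (a : Fin (k + 1) → ℝ) (ha0 : 0 < a 0)
    (A : Set ℝ) (hA : MeasurableSet A) :
    Measure.pi (fun i => unifP (a i)) {x | (∑ i, x i) ∈ A}
      = (volume (Icc (0:ℝ) (a 0)))⁻¹ *
          ∫⁻ t in A, Measure.pi (fun i => unifP (a (Fin.succ i)))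
            {x : Fin k → ℝ | (∑ i, x i) ∈ Icc (t - a 0) t} := by
  have hTm : MeasurableSet {p : ℝ × (Fin k → ℝ) | p.1 + ∑ i, p.2 i ∈ A} :=
    (measurable_fst.add ((measurable_finSum k).comp measurable_snd)) hA
  rw [pi_succ_apply k a A hA, Measure.prod_apply_symm hTm]
  set S2 : Set ((Fin k → ℝ) × ℝ) :=
    {q | q.2 ∈ A ∧ q.2 - a 0 ≤ (∑ i, q.1 i) ∧ (∑ i, q.1 i) ≤ q.2} with hS2
  have hS2m : MeasurableSet S2 := by
    rw [hS2, Set.setOf_and, Set.setOf_and]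
    exact (measurable_snd hA).inter
      ((measurableSet_le (measurable_snd.sub measurable_const)
          ((measurable_finSum k).comp measurable_fst)).inter
        (measurableSet_le ((measurable_finSum k).comp measurable_fst) measurable_snd))
  have hvol_ne_top : (volume (Icc (0:ℝ) (a 0)))⁻¹ ≠ ⊤ := by
    rw [Real.volume_Icc, ENNReal.inv_ne_top]
    exact ne_of_gt (ENNReal.ofReal_pos.mpr (by linarith))
  have hslice : ∀ x : Fin k → ℝ,
      unifP (a 0) ((fun y => (y, x)) ⁻¹' {p : ℝ × (Fin k → ℝ) | p.1 + ∑ i, p.2 i ∈ A})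
        = (volume (Icc (0:ℝ) (a 0)))⁻¹ * ∫⁻ t, S2.indicator 1 (x, t) := by
    intro x
    have hpre : ((fun y => (y, x)) ⁻¹' {p : ℝ × (Fin k → ℝ) | p.1 + ∑ i, p.2 i ∈ A})
        = (fun y => y + ∑ i, x i) ⁻¹' A := by
      ext y; simp [Set.mem_preimage]
    rw [hpre]
    simp only [unifP]
    rw [Measure.smul_apply, smul_eq_mul,
      Measure.restrict_apply ((measurable_add_const (∑ i, x i)) hA)]
    congr 1
    have hset : ((fun y => y + ∑ i, x i) ⁻¹' A ∩ Icc 0 (a 0))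
        = (fun y => y + ∑ i, x i) ⁻¹' (A ∩ Icc (∑ i, x i) ((∑ i, x i) + a 0)) := by
      ext y
      simp only [Set.mem_inter_iff, Set.mem_preimage, Set.mem_Icc]
      constructor <;> intro hy <;>
        exact ⟨hy.1, by constructor <;> linarith [hy.2.1, hy.2.2]⟩
    rw [hset,
      (measurePreserving_add_right volume (∑ i, x i)).measure_preimage
        (hA.inter measurableSet_Icc).nullMeasurableSet,
      ← lintegral_indicator_one (hA.inter measurableSet_Icc)]
    congr 1
    funext t
    by_cases ht : t ∈ A ∩ Icc (∑ i, x i) ((∑ i, x i) + a 0)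
    · rw [indicator_of_mem ht, indicator_of_mem (by
        simp only [hS2, Set.mem_setOf_eq]
        exact ⟨ht.1, by linarith [ht.2.2], ht.2.1⟩)]
      rfl
    · rw [indicator_of_notMem ht, indicator_of_notMem]
      intro hc
      simp only [hS2, Set.mem_setOf_eq] at hc
      exact ht ⟨hc.1, Set.mem_Icc.mpr ⟨hc.2.2, by linarith [hc.2.1]⟩⟩
  simp_rw [hslice]
  rw [lintegral_const_mul' _ _ hvol_ne_top]
  congr 1
  rw [lintegral_lintegral_swap (f := fun x t => S2.indicator 1 (x, t))
    (by exact (measurable_const.indicator hS2m).aemeasurable)]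
  rw [← lintegral_indicator hA]
  congr 1
  funext t
  by_cases ht : t ∈ A
  · rw [indicator_of_mem ht]
    have hinner : ∀ x : Fin k → ℝ, S2.indicator 1 (x, t)
        = Set.indicator {x : Fin k → ℝ | (∑ i, x i) ∈ Icc (t - a 0) t} (1 : (Fin k → ℝ) → ENNReal) x := by
      intro x
      by_cases hx : (∑ i, x i) ∈ Icc (t - a 0) t
      · rw [indicator_of_mem (show ((x, t) : (Fin k → ℝ) × ℝ) ∈ S2 by
          simp only [hS2, Set.mem_setOf_eq]
          exact ⟨ht, hx.1, hx.2⟩),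
          indicator_of_mem (show x ∈ {x : Fin k → ℝ | (∑ i, x i) ∈ Icc (t - a 0) t} from hx)]
        rfl
      · rw [indicator_of_notMem
            (show x ∉ {x : Fin k → ℝ | (∑ i, x i) ∈ Icc (t - a 0) t} from hx),
          indicator_of_notMem]
        intro hc
        simp only [hS2, Set.mem_setOf_eq] at hc
        exact hx (Set.mem_Icc.mpr ⟨hc.2.1, hc.2.2⟩)
    simp_rw [hinner]
    exact lintegral_indicator_one
      (show MeasurableSet {x : Fin k → ℝ | (∑ i, x i) ∈ Icc (t - a 0) t} from
        (measurable_finSum k) measurableSet_Icc)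
  · rw [indicator_of_notMem ht]
    have hz : ∀ x : Fin k → ℝ, S2.indicator 1 (x, t) = (0 : ENNReal) := by
      intro x
      refine indicator_of_notMem (fun hc => ?_) _
      simp only [hS2, Set.mem_setOf_eq] at hc
      exact ht hc.1
    simp_rw [hz]
    simp

/-- The central probability bound. -/
lemma central (m : ℕ) (hm : m ≠ 0) (a : Fin m → ℝ) (ha : ∀ i, 0 < a i) (t : ℝ)
    (ht0 : 0 ≤ t) (ht1 : t < 1) (hsum : ∑ i, a i = 1 + t) :
    ENNReal.ofReal ((1 - t) / (1 + t))
      ≤ Measure.pi (fun i => unifP (a i)) {x | (∑ i, x i) ∈ Icc t 1} := by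
  obtain ⟨k, rfl⟩ := Nat.exists_eq_succ_of_ne_zero hm
  set μ' := Measure.pi (fun i => unifP (a (Fin.succ i))) with hμ'
  set I : ENNReal := (volume (Icc (0:ℝ) (a 0)))⁻¹ with hI
  have hI_ne_top : I ≠ ⊤ := by
    rw [hI, Real.volume_Icc, ENNReal.inv_ne_top]
    exact ne_of_gt (ENNReal.ofReal_pos.mpr (by linarith [ha 0]))
  set g : ℝ → ENNReal :=
    fun u => I * μ' {x : Fin k → ℝ | (∑ i, x i) ∈ Icc (u - a 0) u} with hg
  have repr : ∀ A : Set ℝ, MeasurableSet A →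
      Measure.pi (fun i => unifP (a i)) {x | (∑ i, x i) ∈ A} = ∫⁻ u in A, g u := by
    intro A hA
    rw [pi_sum_density k a (ha 0) A hA, hg, lintegral_const_mul' _ _ hI_ne_top]
  have hsum' : (∑ i, a (Fin.succ i)) = 1 + t - a 0 := by
    have h := Fin.sum_univ_succ a
    rw [hsum] at h
    linarith
  have hkey := key k (fun i => a (Fin.succ i)) (fun i => ha _) (a 0 / 2)
    (by linarith [ha 0])
  have hgSym : SymAnti ((1 + t) / 2) g := by
    intro c c' hcc
    have hd : |(c - a 0 / 2) - (∑ i, a (Fin.succ i)) / 2|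
        ≤ |(c' - a 0 / 2) - (∑ i, a (Fin.succ i)) / 2| := by
      have e1 : ∀ u : ℝ, (u - a 0 / 2) - (∑ i, a (Fin.succ i)) / 2 = u - (1 + t) / 2 := by
        intro u; rw [hsum']; ring
      rw [e1 c, e1 c']; exact hcc
    have h2 : μ' {x : Fin k → ℝ | (∑ i, x i)
          ∈ Icc ((c' - a 0 / 2) - a 0 / 2) ((c' - a 0 / 2) + a 0 / 2)}
        ≤ μ' {x : Fin k → ℝ | (∑ i, x i)
          ∈ Icc ((c - a 0 / 2) - a 0 / 2) ((c - a 0 / 2) + a 0 / 2)} := hkey hd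
    have hset : ∀ u : ℝ, Icc ((u - a 0 / 2) - a 0 / 2) ((u - a 0 / 2) + a 0 / 2)
        = Icc (u - a 0) u := by
      intro u; congr 1 <;> ring
    rw [hset c, hset c'] at h2
    exact mul_le_mul_right h2 I
  have hgm : Measurable g := hgSym.measurable
  -- total mass at least one on [0, 1+t]
  have hmass : (1 : ENNReal) ≤ ∫⁻ u in Icc 0 (1 + t), g u := by
    rw [← repr _ measurableSet_Icc]
    refine le_trans (le_of_eq ?_) (measure_mono
      (?_ : (univ.pi fun i => Icc (0:ℝ) (a i)) ⊆ {x | (∑ i, x i) ∈ Icc 0 (1 + t)}))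
    · rw [Measure.pi_pi]
      exact (Finset.prod_eq_one (fun i _ => unifP_Icc (ha i))).symm
    · intro x hx
      simp only [Set.mem_pi, Set.mem_univ, forall_true_left] at hx
      simp only [Set.mem_setOf_eq, Set.mem_Icc]
      refine ⟨Finset.sum_nonneg fun i _ => (hx i).1, ?_⟩
      rw [← hsum]
      exact Finset.sum_le_sum fun i _ => (hx i).2
  set M : ENNReal := ∫⁻ u in Icc t 1, g u with hM
  -- tail pointwise bound
  have htail : ∀ u : ℝ, (1 - t) / 2 ≤ |u - (1 + t) / 2|
      → ENNReal.ofReal (1 - t) * g u ≤ M := by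
    intro u hu
    have hpt : ∀ v ∈ Icc t 1, g u ≤ g v := by
      intro v hv
      rw [Set.mem_Icc] at hv
      refine hgSym ?_
      refine le_trans ?_ hu
      rw [abs_le]
      constructor <;> [linarith [hv.2]; linarith [hv.1]]
    calc ENNReal.ofReal (1 - t) * g u
        = ∫⁻ _ in Icc t 1, g u := by
          rw [setLIntegral_const, Real.volume_Icc, mul_comm]
      _ ≤ M := by
          rw [hM]
          exact setLIntegral_mono hgm hpt
  -- splitting [0, 1+t]
  have hdisj1 : Disjoint (Ico (0:ℝ) t) (Icc t (1 + t)) :=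
    Set.disjoint_left.mpr fun x hx1 hx2 => (not_lt.mpr hx2.1) hx1.2
  have hdisj2 : Disjoint (Icc t (1:ℝ)) (Ioc 1 (1 + t)) :=
    Set.disjoint_left.mpr fun x hx1 hx2 => (not_lt.mpr hx1.2) hx2.1
  have hsplit : ∫⁻ u in Icc 0 (1 + t), g u
      = (∫⁻ u in Ico 0 t, g u) + (M + ∫⁻ u in Ioc 1 (1 + t), g u) := by
    rw [← Set.Ico_union_Icc_eq_Icc ht0 (by linarith : t ≤ 1 + t),
      lintegral_union measurableSet_Icc hdisj1,
      ← Set.Icc_union_Ioc_eq_Icc (le_of_lt ht1) (by linarith : (1:ℝ) ≤ 1 + t),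
      lintegral_union measurableSet_Ioc hdisj2]
  -- combine
  have hmain : ENNReal.ofReal (1 - t) ≤ M * ENNReal.ofReal (1 + t) := by
    have h0 : ENNReal.ofReal (1 - t)
        ≤ ENNReal.ofReal (1 - t) * ∫⁻ u in Icc 0 (1 + t), g u := by
      nth_rewrite 1 [← mul_one (ENNReal.ofReal (1 - t))]
      exact mul_le_mul_right hmass _
    rw [hsplit, mul_add, mul_add] at h0
    have hT1 : ENNReal.ofReal (1 - t) * ∫⁻ u in Ico 0 t, g u
        ≤ M * ENNReal.ofReal t := by
      rw [← lintegral_const_mul' _ _ ENNReal.ofReal_ne_top]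
      calc ∫⁻ u in Ico 0 t, ENNReal.ofReal (1 - t) * g u
          ≤ ∫⁻ _ in Ico 0 t, M := by
            refine setLIntegral_mono measurable_const ?_
            intro u hu
            rw [Set.mem_Ico] at hu
            refine htail u ?_
            rw [abs_sub_comm, abs_of_nonneg (by linarith [hu.2] : 0 ≤ (1 + t) / 2 - u)]
            linarith [hu.2]
        _ = M * ENNReal.ofReal t := by
            rw [setLIntegral_const, Real.volume_Ico, sub_zero]
    have hT2 : ENNReal.ofReal (1 - t) * ∫⁻ u in Ioc 1 (1 + t), g u
        ≤ M * ENNReal.ofReal t := by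
      rw [← lintegral_const_mul' _ _ ENNReal.ofReal_ne_top]
      calc ∫⁻ u in Ioc 1 (1 + t), ENNReal.ofReal (1 - t) * g u
          ≤ ∫⁻ _ in Ioc 1 (1 + t), M := by
            refine setLIntegral_mono measurable_const ?_
            intro u hu
            rw [Set.mem_Ioc] at hu
            refine htail u ?_
            rw [abs_of_nonneg (by linarith [hu.1] : 0 ≤ u - (1 + t) / 2)]
            linarith [hu.1]
        _ = M * ENNReal.ofReal t := by
            rw [setLIntegral_const, Real.volume_Ioc]
            congr 1
            congr 1
            ring
    have hTm : ENNReal.ofReal (1 - t) * M ≤ M * ENNReal.ofReal (1 - t) := by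
      rw [mul_comm]
    have hfin : ENNReal.ofReal (1 - t)
        ≤ M * ENNReal.ofReal t + (M * ENNReal.ofReal (1 - t) + M * ENNReal.ofReal t) :=
      le_trans h0 (add_le_add hT1 (add_le_add hTm hT2))
    rw [← mul_add, ← mul_add, ← ENNReal.ofReal_add (by linarith) ht0,
      ← ENNReal.ofReal_add ht0 (by linarith)] at hfin
    refine le_trans hfin (le_of_eq ?_)
    congr 1
    congr 1
    ring
  rw [repr _ measurableSet_Icc, ← hM,
    ENNReal.ofReal_div_of_pos (by linarith : (0:ℝ) < 1 + t)]
  exact ENNReal.div_le_of_le_mul hmain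

end Stmt5

end

/-- Let `x'_2, ..., x'_n` be independent, `x'_i` uniform on `[0, 1−s_i]`,
with each `s_i ≤ 1 − n^(−2B−2)` and `s_1 := (n−2) − ∑ s_i ∈ [0, 1 − n^(−2B−2)]`.
Then `P(s_1 ≤ ∑ x'_i ≤ 1) ≥ (1−s_1)/(1+s_1)`, which is `Ω(n^(−2B−2))`. -/
theorem stmt_5 (n : ℕ) (hn : 3 ≤ n) (B : ℝ) (hB : 0 < B)
    (s : Fin (n - 1) → ℝ)
    (hs0 : ∀ i, 0 ≤ s i)
    (hs1 : ∀ i, s i ≤ 1 - (n : ℝ) ^ (-(2 * B + 2)))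
    (s₁ : ℝ) (hs₁def : s₁ = ((n : ℝ) - 2) - ∑ i, s i)
    (hs₁0 : 0 ≤ s₁) (hs₁1 : s₁ ≤ 1 - (n : ℝ) ^ (-(2 * B + 2)))
    (μ : Measure (Fin (n - 1) → ℝ))
    (hμ : μ = Measure.pi (fun i =>
      (volume (Set.Icc (0 : ℝ) (1 - s i)))⁻¹ •
        volume.restrict (Set.Icc (0 : ℝ) (1 - s i)))) :
    ENNReal.ofReal ((1 - s₁) / (1 + s₁)) ≤
        μ {x | s₁ ≤ ∑ i, x i ∧ ∑ i, x i ≤ 1} ∧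
      (n : ℝ) ^ (-(2 * B + 2)) / 2 ≤ (1 - s₁) / (1 + s₁) := by
  have hnpos : (0 : ℝ) < n := by
    have h3 : (3 : ℝ) ≤ n := by exact_mod_cast hn
    linarith
  have hδ : 0 < (n : ℝ) ^ (-(2 * B + 2)) := Real.rpow_pos_of_pos hnpos _
  constructor
  · rw [hμ]
    have ha : ∀ i : Fin (n - 1), 0 < 1 - s i := fun i => by linarith [hs1 i]
    have hm : n - 1 ≠ 0 := by omega
    have hsum : ∑ i : Fin (n - 1), (1 - s i) = 1 + s₁ := by
      have hcard : ((n - 1 : ℕ) : ℝ) = (n : ℝ) - 1 := by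
        rw [Nat.cast_sub (by omega : 1 ≤ n), Nat.cast_one]
      rw [Finset.sum_sub_distrib, Finset.sum_const, Finset.card_univ, Fintype.card_fin,
        nsmul_eq_mul, mul_one, hcard]
      linarith [hs₁def]
    have hset : {x : Fin (n - 1) → ℝ | s₁ ≤ ∑ i, x i ∧ (∑ i, x i) ≤ 1}
        = {x : Fin (n - 1) → ℝ | (∑ i, x i) ∈ Set.Icc s₁ 1} := by
      ext x
      simp [Set.mem_Icc]
    rw [hset]
    exact Stmt5.central (n - 1) hm (fun i => 1 - s i) ha s₁ hs₁0 (by linarith) hsum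
  · calc (n : ℝ) ^ (-(2 * B + 2)) / 2 ≤ (1 - s₁) / 2 := by
          apply div_le_div_of_nonneg_right ?_ ?_ <;> [linarith; norm_num]
      _ ≤ (1 - s₁) / (1 + s₁) := by
          apply div_le_div_of_nonneg_left (by linarith) (by linarith) (by linarith)
end

section
/- For Hermitian n×n matrices U, V and a fixed Hermitian matrix F, and for every polynomial p(x) = x^k with k ≥ 0, one has tr((U+F)^k) + tr((V+F)^k) − 2·tr(((U+V)/2 + F)^k) ≥ 0 whenever k is even; more generally, for any convex function g : ℝ → ℝ applied via the functional calculus, the map M ↦ tr(g(M + F)) on Hermitian matrices is convex. -/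
open Matrix in
lemma peierls_aux {n : ℕ} (A : Matrix (Fin n) (Fin n) ℂ) (hA : A.IsHermitian)
    (S : Matrix (Fin n) (Fin n) ℂ) (hS1 : Sᴴ * S = 1) (hS2 : S * Sᴴ = 1)
    (g : ℝ → ℝ) (hg : ConvexOn ℝ Set.univ g) :
    ∑ i, g (((Sᴴ * A * S) i i).re) ≤ ∑ i, g (hA.eigenvalues i) := by
  set T : Matrix (Fin n) (Fin n) ℂ := (hA.eigenvectorUnitary : Matrix (Fin n) (Fin n) ℂ) with hTdef
  have hT2 : T * Tᴴ = 1 := by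
    rw [← Matrix.star_eq_conjTranspose]
    exact Matrix.mem_unitaryGroup_iff.mp (hA.eigenvectorUnitary).2
  have hT1 : Tᴴ * T = 1 := mul_eq_one_comm.mp hT2
  set Q : Matrix (Fin n) (Fin n) ℂ := Sᴴ * T with hQdef
  have hQ1 : Q * Qᴴ = 1 := by
    rw [hQdef, conjTranspose_mul, conjTranspose_conjTranspose, Matrix.mul_assoc,
      ← Matrix.mul_assoc T, hT2, Matrix.one_mul, hS1]
  have hQ2 : Qᴴ * Q = 1 := mul_eq_one_comm.mp hQ1
  have hdiag : Sᴴ * A * S = Q * Matrix.diagonal (RCLike.ofReal ∘ hA.eigenvalues) * Qᴴ := by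
    conv_lhs => rw [hA.spectral_theorem, Unitary.conjStarAlgAut_apply]
    rw [hQdef, conjTranspose_mul, conjTranspose_conjTranspose]
    rw [← hTdef, ← Matrix.star_eq_conjTranspose T]
    simp only [Matrix.mul_assoc, Matrix.star_eq_conjTranspose]
  have hrow : ∀ i, ∑ j, Complex.normSq (Q i j) = 1 := by
    intro i
    have h := congrFun (congrFun hQ1 i) i
    rw [Matrix.mul_apply] at h
    simp only [conjTranspose_apply, Matrix.one_apply_eq, Complex.star_def] at h
    have h2 : ((∑ j, Complex.normSq (Q i j) : ℝ) : ℂ) = 1 := by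
      push_cast
      rw [← h]
      exact Finset.sum_congr rfl fun j _ => by rw [Complex.mul_conj]
    exact_mod_cast h2
  have hcol : ∀ j, ∑ i, Complex.normSq (Q i j) = 1 := by
    intro j
    have h := congrFun (congrFun hQ2 j) j
    rw [Matrix.mul_apply] at h
    simp only [conjTranspose_apply, Matrix.one_apply_eq, Complex.star_def] at h
    have h2 : ((∑ i, Complex.normSq (Q i j) : ℝ) : ℂ) = 1 := by
      push_cast
      rw [← h]
      exact Finset.sum_congr rfl fun i _ => by rw [mul_comm, Complex.mul_conj]
    exact_mod_cast h2
  have entry : ∀ i, ((Sᴴ * A * S) i i).re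
      = ∑ j, Complex.normSq (Q i j) * hA.eigenvalues j := by
    intro i
    rw [hdiag, Matrix.mul_apply]
    have : ∀ j, ((Q * Matrix.diagonal (RCLike.ofReal ∘ hA.eigenvalues) : Matrix (Fin n) (Fin n) ℂ)) i j * Qᴴ j i
        = ((Complex.normSq (Q i j) * hA.eigenvalues j : ℝ) : ℂ) := by
      intro j
      rw [Matrix.mul_diagonal, conjTranspose_apply, Complex.star_def, mul_right_comm,
        Complex.mul_conj]
      simp only [Function.comp_apply]
      push_cast
      rfl
    rw [Finset.sum_congr rfl fun j _ => this j]
    push_cast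
    simp
  calc ∑ i, g (((Sᴴ * A * S) i i).re)
      = ∑ i, g (∑ j, Complex.normSq (Q i j) • hA.eigenvalues j) := by
        simp only [smul_eq_mul]
        exact Finset.sum_congr rfl fun i _ => by rw [entry i]
    _ ≤ ∑ i, ∑ j, Complex.normSq (Q i j) • g (hA.eigenvalues j) := by
        refine Finset.sum_le_sum fun i _ => ?_
        exact hg.map_sum_le (fun j _ => Complex.normSq_nonneg _) (hrow i)
          (fun j _ => Set.mem_univ _)
    _ = ∑ j, (∑ i, Complex.normSq (Q i j)) * g (hA.eigenvalues j) := by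
        rw [Finset.sum_comm]
        exact Finset.sum_congr rfl fun j _ => by rw [Finset.sum_mul]; simp [smul_eq_mul]
    _ = ∑ j, g (hA.eigenvalues j) := by
        exact Finset.sum_congr rfl fun j _ => by rw [hcol j, one_mul]

open Matrix in
lemma trace_pow_eq {n : ℕ} (A : Matrix (Fin n) (Fin n) ℂ) (hA : A.IsHermitian) (k : ℕ) :
    (A ^ k).trace = ((∑ i, hA.eigenvalues i ^ k : ℝ) : ℂ) := by
  set T : Matrix (Fin n) (Fin n) ℂ := (hA.eigenvectorUnitary : Matrix (Fin n) (Fin n) ℂ) with hTdef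
  have hT2 : T * Tᴴ = 1 := by
    rw [← Matrix.star_eq_conjTranspose]
    exact Matrix.mem_unitaryGroup_iff.mp (hA.eigenvectorUnitary).2
  have hT1 : Tᴴ * T = 1 := mul_eq_one_comm.mp hT2
  set D : Matrix (Fin n) (Fin n) ℂ := Matrix.diagonal (RCLike.ofReal ∘ hA.eigenvalues) with hD
  have hspec : A = T * D * Tᴴ := by
    rw [hD, hTdef, ← Matrix.star_eq_conjTranspose]
    exact hA.spectral_theorem
  have hpow : A ^ k = T * D ^ k * Tᴴ := by
    induction k with
    | zero => rw [pow_zero, pow_zero, Matrix.mul_one, hT2]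
    | succ k ih =>
        rw [pow_succ, ih, hspec, pow_succ]
        simp only [Matrix.mul_assoc]
        rw [← Matrix.mul_assoc Tᴴ T, hT1, Matrix.one_mul]
  rw [hpow, Matrix.trace_mul_cycle, hT1, Matrix.one_mul, hD, Matrix.diagonal_pow,
    Matrix.trace_diagonal]
  push_cast
  rfl

open Matrix in
lemma key_convex {n : ℕ} (A B W : Matrix (Fin n) (Fin n) ℂ)
    (hA : A.IsHermitian) (hB : B.IsHermitian) (hW : W.IsHermitian)
    (hWe : W = ((1 : ℂ) / 2) • (A + B))
    (g : ℝ → ℝ) (hg : ConvexOn ℝ Set.univ g) :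
    2 * ∑ i, g (hW.eigenvalues i) ≤ ∑ i, g (hA.eigenvalues i) + ∑ i, g (hB.eigenvalues i) := by
  set S : Matrix (Fin n) (Fin n) ℂ := (hW.eigenvectorUnitary : Matrix (Fin n) (Fin n) ℂ) with hSdef
  have hS1 : Sᴴ * S = 1 := by
    rw [← Matrix.star_eq_conjTranspose]
    exact mul_eq_one_comm.mp (Matrix.mem_unitaryGroup_iff.mp (hW.eigenvectorUnitary).2)
  have hS2 : S * Sᴴ = 1 := mul_eq_one_comm.mp hS1
  have hdW : Sᴴ * W * S = Matrix.diagonal (RCLike.ofReal ∘ hW.eigenvalues) := by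
    rw [hSdef, ← Matrix.star_eq_conjTranspose]
    conv_lhs => arg 1; arg 2; rw [hW.spectral_theorem, Unitary.conjStarAlgAut_apply]
    simp only [Matrix.mul_assoc]
    rw [Unitary.coe_star_mul_self, Matrix.mul_one, ← Matrix.mul_assoc, Unitary.coe_star_mul_self,
      Matrix.one_mul]
  have hlam : ∀ i, hW.eigenvalues i = ((Sᴴ * W * S) i i).re := by
    intro i
    rw [hdW]
    simp [Matrix.diagonal_apply_eq, Function.comp]
  have hmid : ∀ i, ((Sᴴ * W * S) i i).re
      = (1/2 : ℝ) * ((Sᴴ * A * S) i i).re + (1/2 : ℝ) * ((Sᴴ * B * S) i i).re := by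
    intro i
    have hsplit : Sᴴ * W * S = ((1:ℂ)/2) • (Sᴴ * A * S + Sᴴ * B * S) := by
      rw [hWe, Matrix.mul_smul, Matrix.smul_mul, Matrix.mul_add, Matrix.add_mul]
    rw [hsplit]
    simp only [Matrix.smul_apply, Matrix.add_apply, smul_eq_mul, Complex.mul_re,
      Complex.add_re, Complex.add_im]
    norm_num
    ring
  have hP1 := peierls_aux A hA S hS1 hS2 g hg
  have hP2 := peierls_aux B hB S hS1 hS2 g hg
  have step : ∀ i, g (hW.eigenvalues i)
      ≤ (1/2 : ℝ) * g (((Sᴴ * A * S) i i).re) + (1/2 : ℝ) * g (((Sᴴ * B * S) i i).re) := by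
    intro i
    rw [hlam, hmid]
    have := hg.2 (Set.mem_univ (((Sᴴ * A * S) i i).re)) (Set.mem_univ (((Sᴴ * B * S) i i).re))
      (by norm_num : (0:ℝ) ≤ 1/2) (by norm_num : (0:ℝ) ≤ 1/2) (by norm_num : (1/2 : ℝ) + 1/2 = 1)
    simpa [smul_eq_mul] using this
  have hsum : ∑ i, g (hW.eigenvalues i)
      ≤ (1/2 : ℝ) * ∑ i, g (((Sᴴ * A * S) i i).re)
        + (1/2 : ℝ) * ∑ i, g (((Sᴴ * B * S) i i).re) := by
    have := Finset.sum_le_sum (fun i (_ : i ∈ Finset.univ) => step i)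
    simpa [Finset.sum_add_distrib, Finset.mul_sum] using this
  linarith

/-- For Hermitian `n×n` matrices `U`, `V` and a fixed Hermitian `F`:
for every even `k`, `tr((U+F)^k) + tr((V+F)^k) − 2 tr(((U+V)/2+F)^k) ≥ 0`;
and for any convex `g : ℝ → ℝ` applied via the functional calculus
(`tr g(H) = ∑ g(λ_i(H))`), the map `M ↦ tr(g(M+F))` is convex, i.e.
`2 tr(g((U+V)/2+F)) ≤ tr(g(U+F)) + tr(g(V+F))`. -/
theorem stmt_11 (n : ℕ) (U V F : Matrix (Fin n) (Fin n) ℂ)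
    (hU : U.IsHermitian) (hV : V.IsHermitian) (hF : F.IsHermitian)
    (hUF : (U + F).IsHermitian) (hVF : (V + F).IsHermitian)
    (hW : (((1 : ℂ) / 2) • (U + V) + F).IsHermitian)
    (g : ℝ → ℝ) (hg : ConvexOn ℝ Set.univ g) :
    (∀ k : ℕ, Even k →
      0 ≤ (((U + F) ^ k).trace + ((V + F) ^ k).trace
            - 2 * ((((1 : ℂ) / 2) • (U + V) + F) ^ k).trace).re) ∧
    2 * ∑ i, g (hW.eigenvalues i) ≤
      (∑ i, g (hUF.eigenvalues i)) + ∑ i, g (hVF.eigenvalues i) := by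
  have hWe : ((1 : ℂ) / 2) • (U + V) + F = ((1:ℂ)/2) • ((U + F) + (V + F)) := by
    ext i j
    simp only [Matrix.add_apply, Matrix.smul_apply, smul_eq_mul]
    ring
  constructor
  · intro k hk
    have hgk : ConvexOn ℝ Set.univ (fun x : ℝ => x ^ k) := hk.convexOn_pow
    have hkey := key_convex (U + F) (V + F) _ hUF hVF hW hWe _ hgk
    rw [trace_pow_eq _ hUF, trace_pow_eq _ hVF, trace_pow_eq _ hW]
    have h2 : (2 : ℂ) * ((∑ i, hW.eigenvalues i ^ k : ℝ) : ℂ)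
        = ((2 * ∑ i, hW.eigenvalues i ^ k : ℝ) : ℂ) := by push_cast; ring
    rw [h2, ← Complex.ofReal_add, ← Complex.ofReal_sub, Complex.ofReal_re]
    linarith [hkey]
  · exact key_convex (U + F) (V + F) _ hUF hVF hW hWe g hg
end

section
/- Let g : ℝ → ℝ be Lipschitz with constant L, and let F be a fixed n×n Hermitian matrix. Then the function M ↦ tr(g((1/√n)M + F)), defined on n×n Hermitian matrices M with the Hilbert–Schmidt norm, is Lipschitz with constant at most 2L. -/
open Matrix Finset

variable {n : Type*} [Fintype n] [DecidableEq n]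

/-- trace of product of two Hermitian matrices via eigen-decompositions. -/
lemma trace_herm_mul (A B : Matrix n n ℂ) (hA : A.IsHermitian) (hB : B.IsHermitian) :
    (A * B).trace =
      ((∑ i, ∑ j, ‖((star (hA.eigenvectorUnitary : Matrix n n ℂ)) *
          (hB.eigenvectorUnitary : Matrix n n ℂ)) i j‖ ^ 2 *
          (hA.eigenvalues i * hB.eigenvalues j) : ℝ) : ℂ) := by
  set P := (hA.eigenvectorUnitary : Matrix n n ℂ) with hP
  set Q := (hB.eigenvectorUnitary : Matrix n n ℂ) with hQ
  set W := star P * Q with hW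
  have hPP : star P * P = 1 := Unitary.coe_star_mul_self hA.eigenvectorUnitary
  have hQQ : Q * star Q = 1 := Unitary.coe_mul_star_self hB.eigenvectorUnitary
  set Dα : Matrix n n ℂ := diagonal (RCLike.ofReal ∘ hA.eigenvalues) with hDα
  set Dβ : Matrix n n ℂ := diagonal (RCLike.ofReal ∘ hB.eigenvalues) with hDβ
  have h1 : A * B = P * (Dα * W * Dβ * star W) * star P := by
    rw [hA.spectral_theorem, hB.spectral_theorem]
    have hPs : P * star P = 1 := Unitary.coe_mul_star_self hA.eigenvectorUnitary
    simp only [hW, StarMul.star_mul, star_star, Matrix.mul_assoc, Unitary.conjStarAlgAut_apply,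
      Unitary.coe_star]
    rw [hPs, Matrix.mul_one]
  rw [h1, Matrix.trace_mul_cycle, ← Matrix.mul_assoc, hPP, Matrix.one_mul]
  simp only [Matrix.trace, Matrix.diag, Matrix.mul_apply, hDα, hDβ, diagonal_apply,
    Function.comp]
  push_cast
  simp only [mul_ite, ite_mul, zero_mul, mul_zero, Finset.sum_ite_eq, Finset.sum_ite_eq',
    Finset.mem_univ, if_true, Matrix.star_apply, Complex.star_def]
  clear_value W
  simp only [show (RCLike.ofReal : ℝ → ℂ) = Complex.ofReal from rfl]
  refine Finset.sum_congr rfl fun x _ => Finset.sum_congr rfl fun y _ => ?_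
  have h2 : ((‖W x y‖ : ℂ)) ^ 2 = W x y * (starRingEnd ℂ) (W x y) := by
    rw [Complex.mul_conj, ← Complex.sq_norm]; push_cast; ring
  rw [h2]; ring

lemma herm_hoffman_wielandt (A B : Matrix n n ℂ) (hA : A.IsHermitian) (hB : B.IsHermitian) :
    ∃ σ : Equiv.Perm n, ∑ i, (hA.eigenvalues i - hB.eigenvalues (σ i)) ^ 2 ≤
      ∑ i, ∑ j, ‖(A - B) i j‖ ^ 2 := by
  classical
  set P := (hA.eigenvectorUnitary : Matrix n n ℂ) with hP
  set Q := (hB.eigenvectorUnitary : Matrix n n ℂ) with hQ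
  set W := star P * Q with hW
  set α := hA.eigenvalues with hα
  set β := hB.eigenvalues with hβ
  have hPP : star P * P = 1 := Unitary.coe_star_mul_self hA.eigenvectorUnitary
  have hPs : P * star P = 1 := Unitary.coe_mul_star_self hA.eigenvectorUnitary
  have hQQ : star Q * Q = 1 := Unitary.coe_star_mul_self hB.eigenvectorUnitary
  have hQs : Q * star Q = 1 := Unitary.coe_mul_star_self hB.eigenvectorUnitary
  set d : Matrix n n ℝ := fun i j => ‖W i j‖ ^ 2 with hd
  -- W is unitary
  have hWW : W * star W = 1 := by
    rw [hW, StarMul.star_mul, star_star, Matrix.mul_assoc, ← Matrix.mul_assoc Q, hQs,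
      Matrix.one_mul, hPP]
  have hWW' : star W * W = 1 := by
    rw [hW, StarMul.star_mul, star_star, Matrix.mul_assoc, ← Matrix.mul_assoc P, hPs,
      Matrix.one_mul, hQQ]
  clear_value W
  -- entry sums of |W i j|^2
  have hrow : ∀ i, ∑ j, d i j = 1 := by
    intro i
    have h1 : (W * star W) i i = 1 := by rw [hWW]; simp
    rw [Matrix.mul_apply] at h1
    have h2 : ∀ j, W i j * (star W) j i = ((d i j : ℝ) : ℂ) := by
      intro j
      rw [Matrix.star_apply, Complex.star_def, Complex.mul_conj, hd, ← Complex.sq_norm]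
    rw [Finset.sum_congr rfl fun j _ => h2 j, ← Complex.ofReal_sum] at h1
    exact_mod_cast h1
  have hcol : ∀ j, ∑ i, d i j = 1 := by
    intro j
    have h1 : (star W * W) j j = 1 := by rw [hWW']; simp
    rw [Matrix.mul_apply] at h1
    have h2 : ∀ i, (star W) j i * W i j = ((d i j : ℝ) : ℂ) := by
      intro i
      rw [Matrix.star_apply, Complex.star_def, mul_comm, Complex.mul_conj, hd,
        ← Complex.sq_norm]
    rw [Finset.sum_congr rfl fun i _ => h2 i, ← Complex.ofReal_sum] at h1
    exact_mod_cast h1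
  have hd_mem : d ∈ doublyStochastic ℝ n := by
    rw [mem_doublyStochastic_iff_sum]
    exact ⟨fun i j => by positivity, hrow, hcol⟩
  -- the Hilbert-Schmidt identity
  have key : ∑ i, ∑ j, ‖(A - B) i j‖ ^ 2 =
      ∑ i, ∑ j, d i j * (α i - β j) ^ 2 := by
    have hC : (A - B).IsHermitian := hA.sub hB
    have e1 : (((∑ i, ∑ j, ‖(A - B) i j‖ ^ 2 : ℝ)) : ℂ) =
        ((A - B) * (A - B)).trace := by
      rw [Matrix.trace]
      push_cast
      refine Finset.sum_congr rfl fun i _ => ?_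
      rw [Matrix.diag_apply, Matrix.mul_apply]
      refine Finset.sum_congr rfl fun j _ => ?_
      have hji : (A - B) j i = (starRingEnd ℂ) ((A - B) i j) := by
        conv_lhs => rw [← hC]
        simp [Matrix.conjTranspose_apply]
      rw [hji, Complex.mul_conj, ← Complex.sq_norm]
      push_cast; ring
    have e2 : ((A - B) * (A - B)).trace =
        (A * A).trace - (A * B).trace - (B * A).trace + (B * B).trace := by
      simp only [Matrix.sub_mul, Matrix.mul_sub, Matrix.trace_sub]
      ring
    have eAA := trace_herm_mul A A hA hA
    have eBB := trace_herm_mul B B hB hB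
    have eAB := trace_herm_mul A B hA hB
    have eBA : (B * A).trace = (A * B).trace := Matrix.trace_mul_comm B A
    rw [← hP, ← hQ, ← hW] at eAB
    rw [← hP, hPP] at eAA
    rw [← hQ, hQQ] at eBB
    have hone : ∀ i j : n, ‖(1 : Matrix n n ℂ) i j‖ ^ 2
        = if i = j then 1 else 0 := by
      intro i j
      by_cases h : i = j <;> simp [Matrix.one_apply, h]
    have eAA' : (A * A).trace = ((∑ i, α i ^ 2 : ℝ) : ℂ) := by
      rw [eAA]
      congr 1
      rw [Finset.sum_congr rfl fun i _ => Finset.sum_congr rfl fun j _ => by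
        rw [hone i j]]
      simp [Finset.sum_ite_eq, sq, hα]
    have eBB' : (B * B).trace = ((∑ i, β i ^ 2 : ℝ) : ℂ) := by
      rw [eBB]
      congr 1
      rw [Finset.sum_congr rfl fun i _ => Finset.sum_congr rfl fun j _ => by
        rw [hone i j]]
      simp [Finset.sum_ite_eq, sq, hβ]
    have e3 : (((∑ i, ∑ j, ‖(A - B) i j‖ ^ 2 : ℝ)) : ℂ) =
        (((∑ i, α i ^ 2) + (∑ i, β i ^ 2) - 2 * ∑ i, ∑ j, d i j * (α i * β j) : ℝ) : ℂ) := by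
      rw [e1, e2, eAA', eBB', eBA, eAB]
      simp only [hd, hα, hβ]
      push_cast
      ring
    have e4 := Complex.ofReal_inj.mp e3
    rw [e4]
    have expand : ∀ i j, d i j * (α i - β j) ^ 2
        = d i j * α i ^ 2 + d i j * β j ^ 2 - 2 * (d i j * (α i * β j)) := by
      intro i j; ring
    have h1 : ∀ i, ∑ j, d i j * (α i - β j) ^ 2
        = α i ^ 2 + (∑ j, d i j * β j ^ 2) - 2 * ∑ j, d i j * (α i * β j) := by
      intro i
      rw [Finset.sum_congr rfl fun j _ => expand i j, Finset.sum_sub_distrib,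
        Finset.sum_add_distrib, ← Finset.sum_mul, hrow i, one_mul, ← Finset.mul_sum]
    rw [Finset.sum_congr rfl fun i _ => h1 i, Finset.sum_sub_distrib,
      Finset.sum_add_distrib, ← Finset.mul_sum,
      show (∑ i, ∑ j, d i j * β j ^ 2) = ∑ j, β j ^ 2 from by
        rw [Finset.sum_comm]
        exact Finset.sum_congr rfl fun j _ => by rw [← Finset.sum_mul, hcol j, one_mul]]
  -- Birkhoff
  obtain ⟨w, hw0, hw1, hwsum⟩ := exists_eq_sum_perm_of_mem_doublyStochastic hd_mem
  set S : Equiv.Perm n → ℝ := fun σ => ∑ i, (α i - β (σ i)) ^ 2 with hS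
  obtain ⟨σ₀, -, hσ₀⟩ := Finset.exists_min_image Finset.univ S ⟨1, Finset.mem_univ 1⟩
  refine ⟨σ₀, ?_⟩
  rw [key]
  have e5 : ∑ i, ∑ j, d i j * (α i - β j) ^ 2 = ∑ σ : Equiv.Perm n, w σ * S σ := by
    conv_lhs => rw [← hwsum]
    simp only [Matrix.sum_apply]
    simp only [Matrix.smul_apply, smul_eq_mul]
    have step1 : ∀ x y : n, (∑ σ : Equiv.Perm n, w σ * Equiv.Perm.permMatrix ℝ σ x y) *
        (α x - β y) ^ 2 = ∑ σ : Equiv.Perm n, w σ * Equiv.Perm.permMatrix ℝ σ x y *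
        (α x - β y) ^ 2 := fun x y => Finset.sum_mul _ _ _
    rw [Finset.sum_congr rfl fun x _ => Finset.sum_congr rfl fun y _ => step1 x y]
    rw [Finset.sum_congr rfl fun x (_ : x ∈ Finset.univ) =>
      Finset.sum_comm (f := fun y (σ : Equiv.Perm n) =>
        w σ * Equiv.Perm.permMatrix ℝ σ x y * (α x - β y) ^ 2)]
    rw [Finset.sum_comm]
    refine Finset.sum_congr rfl fun σ _ => ?_
    have step2 : ∀ x : n, ∑ y, w σ * Equiv.Perm.permMatrix ℝ σ x y * (α x - β y) ^ 2
        = w σ * (α x - β (σ x)) ^ 2 := by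
      intro x
      rw [Finset.sum_eq_single (σ x)]
      · simp [Equiv.Perm.permMatrix, PEquiv.toMatrix_apply, Equiv.toPEquiv_apply]
      · intro b _ hb
        simp [Equiv.Perm.permMatrix, PEquiv.toMatrix_apply, Equiv.toPEquiv_apply, Ne.symm hb, hb]
      · simp
    rw [Finset.sum_congr rfl fun x _ => step2 x, ← Finset.mul_sum, hS]
  rw [e5]
  calc S σ₀ = ∑ σ : Equiv.Perm n, w σ * S σ₀ := by rw [← Finset.sum_mul, hw1, one_mul]
    _ ≤ ∑ σ : Equiv.Perm n, w σ * S σ := by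
        refine Finset.sum_le_sum fun σ _ => ?_
        exact mul_le_mul_of_nonneg_left (hσ₀ σ (Finset.mem_univ σ)) (hw0 σ)


/-- If `g : ℝ → ℝ` is `L`-Lipschitz and `F` is a fixed `n×n` Hermitian matrix,
then the map `M ↦ tr(g((1/√n)M + F))` (via the functional calculus,
`tr g(H) = ∑ g(λ_i(H))`) on Hermitian matrices with the Hilbert–Schmidt norm
is Lipschitz with constant at most `2L`. -/
theorem stmt_12 (n : ℕ) (hn : 1 ≤ n) (L : ℝ) (hL : 0 ≤ L)
    (g : ℝ → ℝ) (hg : ∀ x y : ℝ, |g x - g y| ≤ L * |x - y|)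
    (F : Matrix (Fin n) (Fin n) ℂ) (hF : F.IsHermitian)
    (U V : Matrix (Fin n) (Fin n) ℂ)
    (hU : U.IsHermitian) (hV : V.IsHermitian)
    (hU' : (((1 : ℂ) / Real.sqrt n) • U + F).IsHermitian)
    (hV' : (((1 : ℂ) / Real.sqrt n) • V + F).IsHermitian) :
    |(∑ i, g (hU'.eigenvalues i)) - ∑ i, g (hV'.eigenvalues i)| ≤
      2 * L * Real.sqrt (∑ i, ∑ j, ‖(U - V) i j‖ ^ 2) := by
  have hn' : (0 : ℝ) < n := by exact_mod_cast hn
  have hs : (0 : ℝ) < Real.sqrt n := Real.sqrt_pos.mpr hn'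
  obtain ⟨σ, hσ⟩ := herm_hoffman_wielandt _ _ hU' hV'
  set T := ∑ i, ∑ j, ‖(U - V) i j‖ ^ 2 with hT
  have hT0 : (0 : ℝ) ≤ T := by positivity
  have hABsum : ∑ i, ∑ j,
      ‖((((1 : ℂ) / Real.sqrt n) • U + F) - (((1 : ℂ) / Real.sqrt n) • V + F)) i j‖ ^ 2
        = (1 / (n : ℝ)) * T := by
    rw [hT, Finset.mul_sum]
    refine Finset.sum_congr rfl fun i _ => ?_
    rw [Finset.mul_sum]
    refine Finset.sum_congr rfl fun j _ => ?_
    have e : ((((1 : ℂ) / Real.sqrt n) • U + F) - (((1 : ℂ) / Real.sqrt n) • V + F)) i j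
        = ((1 : ℂ) / Real.sqrt n) * (U - V) i j := by
      simp only [Matrix.sub_apply, Matrix.add_apply, Matrix.smul_apply, smul_eq_mul]
      ring
    rw [e, norm_mul, mul_pow]
    congr 1
    rw [norm_div, norm_one, Complex.norm_real, Real.norm_eq_abs, abs_of_nonneg (Real.sqrt_nonneg _),
      div_pow, one_pow, Real.sq_sqrt hn'.le]
  rw [hABsum] at hσ
  set x : Fin n → ℝ := fun i => hU'.eigenvalues i - hV'.eigenvalues (σ i) with hx
  have cs : (∑ i, |x i|) ^ 2 ≤ (n : ℝ) * ∑ i, x i ^ 2 := by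
    have h := sq_sum_le_card_mul_sum_sq (s := (Finset.univ : Finset (Fin n)))
      (f := fun i => |x i|)
    simpa [sq_abs] using h
  have habs : |(∑ i, g (hU'.eigenvalues i)) - ∑ i, g (hV'.eigenvalues i)| ≤ L * ∑ i, |x i| := by
    rw [show (∑ i, g (hV'.eigenvalues i)) = ∑ i, g (hV'.eigenvalues (σ i)) from
      (Equiv.sum_comp σ fun i => g (hV'.eigenvalues i)).symm]
    rw [← Finset.sum_sub_distrib]
    refine (Finset.abs_sum_le_sum_abs _ _).trans ?_
    rw [Finset.mul_sum]
    exact Finset.sum_le_sum fun i _ => hg _ _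
  have hxT : ∑ i, |x i| ≤ Real.sqrt T := by
    have h1 : (∑ i, |x i|) ^ 2 ≤ T := by
      calc (∑ i, |x i|) ^ 2 ≤ (n : ℝ) * ∑ i, x i ^ 2 := cs
        _ ≤ (n : ℝ) * ((1 / (n : ℝ)) * T) := by
            exact mul_le_mul_of_nonneg_left hσ hn'.le
        _ = T := by field_simp
    have h2 := Real.sqrt_le_sqrt h1
    rwa [Real.sqrt_sq (by positivity)] at h2
  calc |(∑ i, g (hU'.eigenvalues i)) - ∑ i, g (hV'.eigenvalues i)|
      ≤ L * ∑ i, |x i| := habs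
    _ ≤ L * Real.sqrt T := mul_le_mul_of_nonneg_left hxT hL
    _ ≤ 2 * L * Real.sqrt T := by nlinarith [Real.sqrt_nonneg T]
end
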